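/- Let U be a nonempty finite type, let X take values in {A,B}, and let Q take values in the three-element set {qA, qB, qAB} with length function ℓ(qA)=ℓ(qB)=1 and ℓ(qAB)=2. Let p be a joint probability mass function of the triple (U,X,Q) such that P(U=u)>0 for every u, satisfying decodability (P(X=A, Q=qB)=0 and P(X=B, Q=qA)=0) and privacy (Q is independent of U, i.e. P(U=u, Q=q)=P(U=u)·P(Q=q) for all u,q). Then the expected download cost satisfies E[ℓ(Q)] ≥ 2 − π(A) − π(B), where π(x) = min over u of P(X=x | U=u). -/

import Mathlib

/-- The two sources. -/
inductive Src | A | B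
deriving DecidableEq

instance : Fintype Src := ⟨{Src.A, Src.B}, fun x => by cases x <;> simp⟩

/-- The three possible queries: only source A, only source B, or both. -/
inductive Qry | qA | qB | qAB
deriving DecidableEq

instance : Fintype Qry := ⟨{Qry.qA, Qry.qB, Qry.qAB}, fun x => by cases x <;> simp⟩

/-- The length (download cost) of each query. -/
noncomputable def len : Qry → ℝ
  | Qry.qA => 1
  | Qry.qB => 1
  | Qry.qAB => 2

/-- Converse bound: any joint pmf of (U,X,Q) satisfying decodability and privacy has
expected download cost at least `2 - π(A) - π(B)` where `π(x) = min_u P(X=x | U=u)`. -/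
theorem converse_bound {U : Type} [Fintype U] [Nonempty U]
    (p : U → Src → Qry → ℝ)
    (hnn : ∀ u x q, 0 ≤ p u x q)
    (hsum : ∑ u, ∑ x, ∑ q, p u x q = 1)
    (hUpos : ∀ u, 0 < ∑ x, ∑ q, p u x q)
    (hdecA : ∑ u, p u Src.A Qry.qB = 0)
    (hdecB : ∑ u, p u Src.B Qry.qA = 0)
    (hpriv : ∀ u q, ∑ x, p u x q
      = (∑ x, ∑ q', p u x q') * (∑ u', ∑ x, p u' x q)) :
    2 - Finset.univ.inf' Finset.univ_nonempty
          (fun u => (∑ q, p u Src.A q) / (∑ x, ∑ q, p u x q))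
      - Finset.univ.inf' Finset.univ_nonempty
          (fun u => (∑ q, p u Src.B q) / (∑ x, ∑ q, p u x q))
      ≤ ∑ u, ∑ x, ∑ q, p u x q * len q := by

  classical
  have sumSrc : ∀ f : Src → ℝ, ∑ x, f x = f Src.A + f Src.B := fun f => by
    show f Src.A + (f Src.B + 0) = _; ring
  have sumQry : ∀ f : Qry → ℝ, ∑ q, f q = f Qry.qA + f Qry.qB + f Qry.qAB := fun f => by
    show f Qry.qA + (f Qry.qB + (f Qry.qAB + 0)) = _; ring
  set T : Qry → ℝ := fun q => ∑ u', ∑ x, p u' x q with hT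
  -- pointwise zero from decodability
  have hzB : ∀ u, p u Src.B Qry.qA = 0 := by
    intro u
    have := (Finset.sum_eq_zero_iff_of_nonneg (fun u _ => hnn u Src.B Qry.qA)).mp hdecB
    exact this u (Finset.mem_univ u)
  have hzA : ∀ u, p u Src.A Qry.qB = 0 := by
    intro u
    have := (Finset.sum_eq_zero_iff_of_nonneg (fun u _ => hnn u Src.A Qry.qB)).mp hdecA
    exact this u (Finset.mem_univ u)
  -- per-u bounds
  have keyA : ∀ u, T Qry.qA ≤ (∑ q, p u Src.A q) / (∑ x, ∑ q, p u x q) := by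
    intro u
    rw [le_div_iff₀ (hUpos u)]
    have h1 := hpriv u Qry.qA
    rw [sumSrc (fun x => p u x Qry.qA), hzB u, add_zero] at h1
    have h2 : p u Src.A Qry.qA ≤ ∑ q, p u Src.A q :=
      Finset.single_le_sum (fun q _ => hnn u Src.A q) (Finset.mem_univ _)
    calc T Qry.qA * (∑ x, ∑ q, p u x q) = p u Src.A Qry.qA := by rw [h1]; ring
      _ ≤ ∑ q, p u Src.A q := h2
  have keyB : ∀ u, T Qry.qB ≤ (∑ q, p u Src.B q) / (∑ x, ∑ q, p u x q) := by
    intro u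
    rw [le_div_iff₀ (hUpos u)]
    have h1 := hpriv u Qry.qB
    rw [sumSrc (fun x => p u x Qry.qB), hzA u, zero_add] at h1
    have h2 : p u Src.B Qry.qB ≤ ∑ q, p u Src.B q :=
      Finset.single_le_sum (fun q _ => hnn u Src.B q) (Finset.mem_univ _)
    calc T Qry.qB * (∑ x, ∑ q, p u x q) = p u Src.B Qry.qB := by rw [h1]; ring
      _ ≤ ∑ q, p u Src.B q := h2
  have hinfA : T Qry.qA ≤ Finset.univ.inf' Finset.univ_nonempty
      (fun u => (∑ q, p u Src.A q) / (∑ x, ∑ q, p u x q)) :=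
    Finset.le_inf' _ _ (fun u _ => keyA u)
  have hinfB : T Qry.qB ≤ Finset.univ.inf' Finset.univ_nonempty
      (fun u => (∑ q, p u Src.B q) / (∑ x, ∑ q, p u x q)) :=
    Finset.le_inf' _ _ (fun u _ => keyB u)
  -- rewrite the total sum and expected cost
  have htot : T Qry.qA + T Qry.qB + T Qry.qAB = 1 := by
    rw [hT]
    simp only
    rw [← Finset.sum_add_distrib, ← Finset.sum_add_distrib, ← hsum]
    apply Finset.sum_congr rfl
    intro u _
    rw [← Finset.sum_add_distrib, ← Finset.sum_add_distrib]
    apply Finset.sum_congr rfl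
    intro x _
    rw [sumQry (fun q => p u x q)]
  have hE : ∑ u, ∑ x, ∑ q, p u x q * len q = 1 + T Qry.qAB := by
    have : ∑ u, ∑ x, ∑ q, p u x q * len q
        = (∑ u, ∑ x, ∑ q, p u x q) + T Qry.qAB := by
      rw [hT]; simp only
      rw [← Finset.sum_add_distrib]
      apply Finset.sum_congr rfl
      intro u _
      rw [← Finset.sum_add_distrib]
      apply Finset.sum_congr rfl
      intro x _
      rw [sumQry (fun q => p u x q * len q), sumQry (fun q => p u x q)]
      simp [len]; ring
    rw [this, hsum]
  rw [hE]
  have hTnn : 0 ≤ T Qry.qAB := by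
    apply Finset.sum_nonneg; intro u _
    exact Finset.sum_nonneg (fun x _ => hnn u x Qry.qAB)
  nlinarith [hinfA, hinfB, htot]
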